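/- Let V ⊆ 𝒜 and let M=(S,R,L,s_0) and M'=(S',R',L',s_0') be initial structures. If (M,s_0) ↔_{𝒜∖V} (M',s_0'), then the characterizing formulas of the two initial K-structures on V are logically equivalent: F_V(M,s_0) ≡ F_V(M',s_0'). -/
import Mathlib


universe u

/-- A Kripke structure over a set of atoms: a finite nonempty set of states,
a serial transition relation, and a labeling function. -/
structure Kripke (Atom : Type u) where
  State : Type u
  stateFinite : Finite State
  stateNonempty : Nonempty State
  R : State → State → Prop
  serial : ∀ s, ∃ t, R s t
  L : State → Set Atom

instance {Atom : Type u} (M : Kripke Atom) : Finite M.State := M.stateFinite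

/-- A K-structure: a Kripke structure together with one of its states. -/
structure KStruct (Atom : Type u) where
  M : Kripke Atom
  s : M.State

/-- An initial structure: a Kripke structure with an initial state `s0`,
i.e. a state admitting a path visiting every state. -/
structure InitKripke (Atom : Type u) extends Kripke Atom where
  s0 : State
  initial : ∃ π : ℕ → State, π 0 = s0 ∧ (∀ n, R (π n) (π (n + 1))) ∧ ∀ t, ∃ n, π n = t

/-- The (initial) K-structure associated to an initial structure. -/
def InitKripke.toKS {Atom : Type u} (M : InitKripke Atom) : KStruct Atom :=
  ⟨M.toKripke, M.s0⟩

/-- The approximations `B_n^V` of `V`-bisimilarity on K-structures. -/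
def BRel {Atom : Type u} (V : Set Atom) : ℕ → KStruct Atom → KStruct Atom → Prop
  | 0 => fun K1 K2 => K1.M.L K1.s \ V = K2.M.L K2.s \ V
  | n + 1 => fun K1 K2 =>
      K1.M.L K1.s \ V = K2.M.L K2.s \ V ∧
      (∀ t1, K1.M.R K1.s t1 → ∃ t2, K2.M.R K2.s t2 ∧ BRel V n ⟨K1.M, t1⟩ ⟨K2.M, t2⟩) ∧
      (∀ t2, K2.M.R K2.s t2 → ∃ t1, K1.M.R K1.s t1 ∧ BRel V n ⟨K1.M, t1⟩ ⟨K2.M, t2⟩)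

/-- `V`-bisimilarity `K1 ↔_V K2` of K-structures. -/
def VBisim {Atom : Type u} (V : Set Atom) (K1 K2 : KStruct Atom) : Prop :=
  ∀ n, BRel V n K1 K2

/-- CTL formulas in existential normal form. -/
inductive CTL (Atom : Type u) : Type u
  | bot  : CTL Atom
  | top  : CTL Atom
  | atom (p : Atom) : CTL Atom
  | neg  (φ : CTL Atom) : CTL Atom
  | or   (φ ψ : CTL Atom) : CTL Atom
  | EX   (φ : CTL Atom) : CTL Atom
  | EG   (φ : CTL Atom) : CTL Atom
  | EU   (φ ψ : CTL Atom) : CTL Atom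

namespace CTL
variable {Atom : Type u}

def and (φ ψ : CTL Atom) : CTL Atom := .neg (.or (.neg φ) (.neg ψ))
def imp (φ ψ : CTL Atom) : CTL Atom := .or (.neg φ) ψ
def iff (φ ψ : CTL Atom) : CTL Atom := (φ.imp ψ).and (ψ.imp φ)
def AX (φ : CTL Atom) : CTL Atom := .neg (.EX (.neg φ))
def EF (φ : CTL Atom) : CTL Atom := .EU .top φ
def AF (φ : CTL Atom) : CTL Atom := .neg (.EG (.neg φ))
def AG (φ : CTL Atom) : CTL Atom := .neg (.EU .top (.neg φ))

/-- The set of atoms occurring in a formula. -/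
def vars : CTL Atom → Set Atom
  | .bot => ∅
  | .top => ∅
  | .atom p => {p}
  | .neg φ => vars φ
  | .or φ ψ => vars φ ∪ vars ψ
  | .EX φ => vars φ
  | .EG φ => vars φ
  | .EU φ ψ => vars φ ∪ vars ψ

end CTL

/-- The standard CTL satisfaction relation `(M,s) ⊨ φ`. -/
def Sat {Atom : Type u} (M : Kripke Atom) : CTL Atom → M.State → Prop
  | .bot => fun _ => False
  | .top => fun _ => True
  | .atom p => fun s => p ∈ M.L s
  | .neg φ => fun s => ¬ Sat M φ s
  | .or φ ψ => fun s => Sat M φ s ∨ Sat M ψ s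
  | .EX φ => fun s => ∃ t, M.R s t ∧ Sat M φ t
  | .EG φ => fun s => ∃ π : ℕ → M.State, π 0 = s ∧ (∀ n, M.R (π n) (π (n + 1))) ∧
      ∀ n, Sat M φ (π n)
  | .EU φ ψ => fun s => ∃ π : ℕ → M.State, π 0 = s ∧ (∀ n, M.R (π n) (π (n + 1))) ∧
      ∃ i, Sat M ψ (π i) ∧ ∀ j < i, Sat M φ (π j)

/-- Satisfaction for K-structures. -/
def KSat {Atom : Type u} (K : KStruct Atom) (φ : CTL Atom) : Prop := Sat K.M φ K.s

/-- The set of models (initial K-structures) of a formula. -/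
def CTLMod {Atom : Type u} (φ : CTL Atom) : Set (InitKripke Atom) :=
  {M | Sat M.toKripke φ M.s0}

def Entails {Atom : Type u} (φ ψ : CTL Atom) : Prop := CTLMod φ ⊆ CTLMod ψ

def CTLEquiv {Atom : Type u} (φ ψ : CTL Atom) : Prop := CTLMod φ = CTLMod ψ

/-- `IR φ V`: φ is irrelevant to the atoms in V. -/
def IR {Atom : Type u} (φ : CTL Atom) (V : Set Atom) : Prop :=
  ∃ ψ : CTL Atom, CTL.vars ψ ∩ V = ∅ ∧ CTLEquiv φ ψ

/-- `V`-bisimilarity of depth-`n` computation trees rooted at `s1` (in `M1`) and `s2` (in `M2`). -/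
def TreeBisim {Atom : Type u} (V : Set Atom) (M1 M2 : Kripke Atom) :
    ℕ → M1.State → M2.State → Prop
  | 0 => fun s1 s2 => M1.L s1 \ V = M2.L s2 \ V
  | n + 1 => fun s1 s2 =>
      M1.L s1 \ V = M2.L s2 \ V ∧
      (∀ t1, M1.R s1 t1 → ∃ t2, M2.R s2 t2 ∧ TreeBisim V M1 M2 n t1 t2) ∧
      (∀ t2, M2.R s2 t2 → ∃ t1, M1.R s1 t1 ∧ TreeBisim V M1 M2 n t1 t2)

/-- Finite conjunction of a list of formulas. -/
def andList {Atom : Type u} : List (CTL Atom) → CTL Atom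
  | [] => .top
  | φ :: l => φ.and (andList l)

/-- Finite disjunction of a list of formulas. -/
def orList {Atom : Type u} : List (CTL Atom) → CTL Atom
  | [] => .bot
  | φ :: l => .or φ (orList l)

/-- A list enumerating a subset of a finite type. -/
noncomputable def setToList {α : Type u} [Finite α] (s : Set α) : List α :=
  s.toFinite.toFinset.toList

/-- The list of `R`-successors of a state. -/
noncomputable def Kripke.succList {Atom : Type u} (M : Kripke Atom) (s : M.State) :
    List M.State :=
  setToList {t | M.R s t}

/-- The characterizing formula `F_V(Tr_0(s))` of the depth-0 computation tree. -/
noncomputable def charTree0 {Atom : Type u} [Finite Atom] (M : Kripke Atom) (V : Set Atom)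
    (s : M.State) : CTL Atom :=
  (andList ((setToList (V ∩ M.L s)).map CTL.atom)).and
    (andList ((setToList (V \ M.L s)).map fun q => CTL.neg (CTL.atom q)))

/-- The characterizing formula `F_V(Tr_n(s))` of the depth-`n` computation tree of `s`. -/
noncomputable def charTree {Atom : Type u} [Finite Atom] (M : Kripke Atom) (V : Set Atom) :
    ℕ → M.State → CTL Atom
  | 0 => fun s => charTree0 M V s
  | k + 1 => fun s =>
      (andList ((M.succList s).map fun t => CTL.EX (charTree M V k t))).and
        ((CTL.AX (orList ((M.succList s).map (charTree M V k)))).and (charTree0 M V s))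

/-- `dis_V(M,s,s',k)`: `s` and `s'` are `V`-distinguishable, and `k` is the least depth at which
their computation trees fail to be `(𝒜∖V)`-bisimilar. -/
def dis {Atom : Type u} (M : Kripke Atom) (V : Set Atom) (s s' : M.State) (k : ℕ) : Prop :=
  ¬ VBisim Vᶜ ⟨M, s⟩ ⟨M, s'⟩ ∧
  IsLeast {n | ¬ TreeBisim Vᶜ M M n s s'} k

/-- The characterization number `ch(M,V)`. -/
noncomputable def ch {Atom : Type u} (M : Kripke Atom) (V : Set Atom) : ℕ :=
  letI := Classical.dec (∃ s s' k, dis M V s s' k)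
  if ∃ s s' k, dis M V s s' k then
    sSup {k | ∃ s s', dis M V s s' k}
  else
    sInf {k | (fun s s' : M.State => BRel Vᶜ k ⟨M, s⟩ ⟨M, s'⟩) =
              (fun s s' : M.State => BRel Vᶜ (k + 1) ⟨M, s⟩ ⟨M, s'⟩)}

/-- The characterizing formula `F_V(M,s0)` of an initial K-structure on `V`. -/
noncomputable def charForm {Atom : Type u} [Finite Atom] (M : InitKripke Atom) (V : Set Atom) :
    CTL Atom :=
  let T : M.State → CTL Atom := fun s => charTree M.toKripke V (ch M.toKripke V) s
  (T M.s0).and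
    (andList ((setToList (Set.univ : Set M.State)).map fun s =>
      CTL.AG ((T s).imp
        ((andList ((M.toKripke.succList s).map fun t => CTL.EX (T t))).and
          (CTL.AX (orList ((M.toKripke.succList s).map T)))))))

/-- `ψ` is a result of forgetting `V` from `φ`. -/
def IsForget {Atom : Type u} (φ : CTL Atom) (V : Set Atom) (ψ : CTL Atom) : Prop :=
  CTL.vars ψ ∩ V = ∅ ∧
  CTLMod ψ = {K : InitKripke Atom | ∃ K' ∈ CTLMod φ, VBisim V K'.toKS K.toKS}

section Auxil
variable {Atom : Type u}

lemma BRel.mono_succ {V : Set Atom} :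
    ∀ n (K1 K2 : KStruct Atom), BRel V (n+1) K1 K2 → BRel V n K1 K2 := by
  intro n
  induction n with
  | zero => intro K1 K2 h; exact h.1
  | succ n ih =>
    rintro K1 K2 ⟨h0, h1, h2⟩
    refine ⟨h0, fun t1 r1 => ?_, fun t2 r2 => ?_⟩
    · obtain ⟨t2, r2, hb⟩ := h1 t1 r1; exact ⟨t2, r2, ih _ _ hb⟩
    · obtain ⟨t1, r1, hb⟩ := h2 t2 r2; exact ⟨t1, r1, ih _ _ hb⟩

lemma BRel.of_le {V : Set Atom} {m n : ℕ} (h : m ≤ n) {K1 K2 : KStruct Atom}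
    (hb : BRel V n K1 K2) : BRel V m K1 K2 := by
  induction h with
  | refl => exact hb
  | step h ih => exact ih (BRel.mono_succ _ _ _ hb)

lemma BRel.symm {V : Set Atom} :
    ∀ n {K1 K2 : KStruct Atom}, BRel V n K1 K2 → BRel V n K2 K1 := by
  intro n
  induction n with
  | zero => intro K1 K2 h; exact Eq.symm h
  | succ n ih =>
    rintro K1 K2 ⟨h0, h1, h2⟩
    refine ⟨h0.symm, fun t2 r2 => ?_, fun t1 r1 => ?_⟩
    · obtain ⟨t1, r1, hb⟩ := h2 t2 r2; exact ⟨t1, r1, ih hb⟩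
    · obtain ⟨t2, r2, hb⟩ := h1 t1 r1; exact ⟨t2, r2, ih hb⟩

lemma BRel.trans {V : Set Atom} :
    ∀ n {K1 K2 K3 : KStruct Atom}, BRel V n K1 K2 → BRel V n K2 K3 → BRel V n K1 K3 := by
  intro n
  induction n with
  | zero => intro K1 K2 K3 h h'; exact Eq.trans h h'
  | succ n ih =>
    rintro K1 K2 K3 ⟨h0, h1, h2⟩ ⟨g0, g1, g2⟩
    refine ⟨h0.trans g0, fun t1 r1 => ?_, fun t3 r3 => ?_⟩
    · obtain ⟨t2, r2, hb⟩ := h1 t1 r1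
      obtain ⟨t3, r3, hb'⟩ := g1 t2 r2
      exact ⟨t3, r3, ih hb hb'⟩
    · obtain ⟨t2, r2, hb'⟩ := g2 t3 r3
      obtain ⟨t1, r1, hb⟩ := h2 t2 r2
      exact ⟨t1, r1, ih hb hb'⟩

lemma VBisim.symm {V : Set Atom} {K1 K2 : KStruct Atom} (h : VBisim V K1 K2) :
    VBisim V K2 K1 := fun n => BRel.symm n (h n)

lemma VBisim.trans {V : Set Atom} {K1 K2 K3 : KStruct Atom} (h : VBisim V K1 K2)
    (h' : VBisim V K2 K3) : VBisim V K1 K3 := fun n => BRel.trans n (h n) (h' n)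

lemma VBisim.step {V : Set Atom} {K1 K2 : KStruct Atom} (h : VBisim V K1 K2)
    {t1 : K1.M.State} (r : K1.M.R K1.s t1) :
    ∃ t2, K2.M.R K2.s t2 ∧ VBisim V ⟨K1.M, t1⟩ ⟨K2.M, t2⟩ := by
  by_contra hc
  push_neg at hc
  simp only [VBisim, not_forall] at hc
  choose f hf using hc
  have : ∃ b, ∀ t2 (r2 : K2.M.R K2.s t2), f t2 r2 ≤ b := by
    have : Finite K2.M.State := K2.M.stateFinite
    have hfin : (Set.range fun p : {t2 // K2.M.R K2.s t2} => f p.1 p.2).Finite :=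
      Set.finite_range _
    obtain ⟨b, hb⟩ := hfin.bddAbove
    exact ⟨b, fun t2 r2 => hb ⟨⟨t2, r2⟩, rfl⟩⟩
  obtain ⟨b, hb⟩ := this
  obtain ⟨_, h1, _⟩ := h (b + 1)
  obtain ⟨t2, r2, hbr⟩ := h1 t1 r
  exact hf t2 r2 (BRel.of_le (hb t2 r2) hbr)

lemma treeBisim_iff_brel {V : Set Atom} {M1 M2 : Kripke Atom} :
    ∀ n (s1 : M1.State) (s2 : M2.State),
      TreeBisim V M1 M2 n s1 s2 ↔ BRel V n ⟨M1, s1⟩ ⟨M2, s2⟩ := by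
  intro n
  induction n with
  | zero => intro s1 s2; exact Iff.rfl
  | succ n ih =>
    intro s1 s2
    constructor
    · rintro ⟨h0, h1, h2⟩
      refine ⟨h0, fun t1 r1 => ?_, fun t2 r2 => ?_⟩
      · obtain ⟨t2, r2, hb⟩ := h1 t1 r1; exact ⟨t2, r2, (ih t1 t2).1 hb⟩
      · obtain ⟨t1, r1, hb⟩ := h2 t2 r2; exact ⟨t1, r1, (ih t1 t2).1 hb⟩
    · rintro ⟨h0, h1, h2⟩
      refine ⟨h0, fun t1 r1 => ?_, fun t2 r2 => ?_⟩
      · obtain ⟨t2, r2, hb⟩ := h1 t1 r1; exact ⟨t2, r2, (ih t1 t2).2 hb⟩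
      · obtain ⟨t1, r1, hb⟩ := h2 t2 r2; exact ⟨t1, r1, (ih t1 t2).2 hb⟩

end Auxil

section Auxil2
variable {Atom : Type u}

lemma sat_and {M : Kripke Atom} {φ ψ : CTL Atom} {s : M.State} :
    Sat M (φ.and ψ) s ↔ Sat M φ s ∧ Sat M ψ s := by
  simp only [CTL.and, Sat]; tauto

lemma sat_imp {M : Kripke Atom} {φ ψ : CTL Atom} {s : M.State} :
    Sat M (φ.imp ψ) s ↔ (Sat M φ s → Sat M ψ s) := by
  simp only [CTL.imp, Sat]; tauto

lemma sat_AX {M : Kripke Atom} {φ : CTL Atom} {s : M.State} :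
    Sat M (CTL.AX φ) s ↔ ∀ t, M.R s t → Sat M φ t := by
  simp only [CTL.AX, Sat]; push_neg; rfl

lemma sat_andList {M : Kripke Atom} {s : M.State} :
    ∀ l : List (CTL Atom), Sat M (andList l) s ↔ ∀ φ ∈ l, Sat M φ s := by
  intro l
  induction l with
  | nil => simp only [andList, List.not_mem_nil, false_implies, implies_true, iff_true]; trivial
  | cons φ l ih =>
    simp only [andList, sat_and, ih, List.mem_cons]
    constructor
    · rintro ⟨h1, h2⟩ ψ (rfl | hm); exacts [h1, h2 _ hm]
    · intro h; exact ⟨h _ (Or.inl rfl), fun ψ hm => h ψ (Or.inr hm)⟩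

lemma sat_orList {M : Kripke Atom} {s : M.State} :
    ∀ l : List (CTL Atom), Sat M (orList l) s ↔ ∃ φ ∈ l, Sat M φ s := by
  intro l
  induction l with
  | nil => simp only [orList, List.not_mem_nil, false_and, exists_false, iff_false]; exact id
  | cons φ l ih =>
    simp only [orList, Sat, ih, List.mem_cons]
    constructor
    · rintro (h | ⟨ψ, hm, hψ⟩); exacts [⟨φ, Or.inl rfl, h⟩, ⟨ψ, Or.inr hm, hψ⟩]
    · rintro ⟨ψ, (rfl | hm), hψ⟩; exacts [Or.inl hψ, Or.inr ⟨ψ, hm, hψ⟩]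

lemma mem_setToList {α : Type u} [Finite α] {S : Set α} {a : α} :
    a ∈ setToList S ↔ a ∈ S := by
  simp [setToList, Set.Finite.mem_toFinset]

lemma mem_succList {M : Kripke Atom} {s t : M.State} :
    t ∈ M.succList s ↔ M.R s t := by
  have : Finite M.State := M.stateFinite
  simp [Kripke.succList, mem_setToList]

/-- A choice of successor for each state. -/
noncomputable def succFun (N : Kripke Atom) (s : N.State) : N.State :=
  Classical.choose (N.serial s)

lemma succFun_spec (N : Kripke Atom) (s : N.State) : N.R s (succFun N s) :=
  Classical.choose_spec (N.serial s)

lemma path_of_reach {N : Kripke Atom} {t0 t : N.State}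
    (h : Relation.ReflTransGen N.R t0 t) :
    ∃ π : ℕ → N.State, π 0 = t0 ∧ (∀ n, N.R (π n) (π (n + 1))) ∧ ∃ i, π i = t := by
  induction h with
  | refl =>
    refine ⟨fun n => (succFun N)^[n] t0, rfl, fun n => ?_, 0, rfl⟩
    dsimp only
    rw [Function.iterate_succ_apply']
    exact succFun_spec N _
  | @tail b c hab hbc ih =>
    obtain ⟨π, h0, hstep, i, hi⟩ := ih
    refine ⟨fun j => if j ≤ i then π j else (succFun N)^[j - i - 1] c, by simp [h0],
      fun n => ?_, i + 1, by simp⟩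
    dsimp only
    rcases lt_trichotomy n i with hn | rfl | hn
    · rw [if_pos hn.le, if_pos (Nat.succ_le_of_lt hn)]
      exact hstep n
    · rw [if_pos le_rfl, if_neg (by omega)]
      simpa [hi] using hbc
    · rw [if_neg (by omega), if_neg (by omega)]
      have : n + 1 - i - 1 = (n - i - 1) + 1 := by omega
      rw [this, Function.iterate_succ_apply']
      exact succFun_spec N _

lemma reach_of_path {N : Kripke Atom} {π : ℕ → N.State}
    (hstep : ∀ n, N.R (π n) (π (n + 1))) : ∀ i, Relation.ReflTransGen N.R (π 0) (π i) := by
  intro i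
  induction i with
  | zero => exact Relation.ReflTransGen.refl
  | succ i ih => exact ih.tail (hstep i)

lemma sat_AG {N : Kripke Atom} {φ : CTL Atom} {t0 : N.State} :
    Sat N (CTL.AG φ) t0 ↔ ∀ t, Relation.ReflTransGen N.R t0 t → Sat N φ t := by
  constructor
  · intro h t hr
    by_contra hnφ
    obtain ⟨π, h0, hstep, i, hi⟩ := path_of_reach hr
    exact h ⟨π, h0, hstep, i, by simpa [Sat, hi] using hnφ, fun j _ => trivial⟩
  · rintro h ⟨π, h0, hstep, i, hnφ, -⟩
    exact hnφ (h (π i) (h0 ▸ reach_of_path hstep i))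

end Auxil2

section Auxil3
variable {Atom : Type u}

lemma sat_charTree0 [Finite Atom] {MM N : Kripke Atom} {V : Set Atom} {s : MM.State}
    {t : N.State} : Sat N (charTree0 MM V s) t ↔ MM.L s \ Vᶜ = N.L t \ Vᶜ := by
  rw [charTree0, sat_and, sat_andList, sat_andList]
  simp only [List.mem_map, mem_setToList, Set.mem_inter_iff, Set.mem_diff]
  constructor
  · rintro ⟨h1, h2⟩
    ext a
    simp only [Set.mem_diff, Set.mem_compl_iff, not_not]
    constructor
    · rintro ⟨ha, haV⟩
      exact ⟨h1 _ ⟨a, ⟨haV, ha⟩, rfl⟩, haV⟩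
    · rintro ⟨ha, haV⟩
      refine ⟨?_, haV⟩
      by_contra hns
      exact h2 (CTL.neg (CTL.atom a)) ⟨a, ⟨haV, hns⟩, rfl⟩ ha
  · intro h
    have h' : ∀ a, a ∈ V → (a ∈ MM.L s ↔ a ∈ N.L t) := by
      intro a haV
      have := Set.ext_iff.1 h a
      simpa [haV] using this
    constructor
    · rintro φ ⟨a, ⟨haV, ha⟩, rfl⟩
      exact (h' a haV).1 ha
    · rintro φ ⟨a, ⟨haV, ha⟩, rfl⟩
      show ¬ _
      simp only [Sat]
      exact fun hc => ha ((h' a haV).2 hc)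

lemma sat_charTree [Finite Atom] {MM N : Kripke Atom} {V : Set Atom} :
    ∀ (n : ℕ) (s : MM.State) (t : N.State),
      Sat N (charTree MM V n s) t ↔ BRel Vᶜ n ⟨MM, s⟩ ⟨N, t⟩ := by
  intro n
  induction n with
  | zero => intro s t; exact sat_charTree0
  | succ n ih =>
    intro s t
    rw [charTree, sat_and, sat_and, sat_andList, sat_AX]
    simp only [List.mem_map, mem_succList, sat_charTree0]
    constructor
    · rintro ⟨h1, h2, h0⟩
      refine ⟨h0, fun t1 r1 => ?_, fun t2 r2 => ?_⟩
      · obtain ⟨t2, r2, hs⟩ := h1 _ ⟨t1, r1, rfl⟩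
        exact ⟨t2, r2, (ih t1 t2).1 hs⟩
      · obtain ⟨φ, hmem, hs⟩ := (sat_orList _).1 (h2 t2 r2)
        obtain ⟨t1, hr1, rfl⟩ := List.mem_map.1 hmem
        exact ⟨t1, mem_succList.1 hr1, (ih t1 t2).1 hs⟩
    · rintro ⟨h0, h1, h2⟩
      refine ⟨?_, fun t2 r2 => ?_, h0⟩
      · rintro φ ⟨t1, r1, rfl⟩
        obtain ⟨t2, r2, hb⟩ := h1 t1 r1
        exact ⟨t2, r2, (ih t1 t2).2 hb⟩
      · obtain ⟨t1, r1, hb⟩ := h2 t2 r2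
        exact (sat_orList _).2 ⟨charTree MM V n t1,
          List.mem_map.2 ⟨t1, mem_succList.2 r1, rfl⟩, (ih t1 t2).2 hb⟩

/-- Successive `BRel` levels eventually imply full bisimilarity on a single finite structure. -/
lemma brel_fix_step (M : Kripke Atom) (W : Set Atom) (n : ℕ)
    (h : ∀ s s' : M.State, BRel W n ⟨M, s⟩ ⟨M, s'⟩ → BRel W (n+1) ⟨M, s⟩ ⟨M, s'⟩) :
    ∀ s s' : M.State, BRel W (n+1) ⟨M, s⟩ ⟨M, s'⟩ → BRel W (n+2) ⟨M, s⟩ ⟨M, s'⟩ := by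
  rintro s s' ⟨h0, h1, h2⟩
  refine ⟨h0, fun t1 r1 => ?_, fun t2 r2 => ?_⟩
  · obtain ⟨t2, r2, hb⟩ := h1 t1 r1; exact ⟨t2, r2, h _ _ hb⟩
  · obtain ⟨t1, r1, hb⟩ := h2 t2 r2; exact ⟨t1, r1, h _ _ hb⟩

lemma brel_stab (M : Kripke Atom) (W : Set Atom) :
    ∃ m : ℕ, ∀ s s' : M.State,
      BRel W m ⟨M, s⟩ ⟨M, s'⟩ → VBisim W ⟨M, s⟩ ⟨M, s'⟩ := by
  classical
  have : Finite M.State := M.stateFinite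
  have : Fintype M.State := Fintype.ofFinite _
  set cnt : ℕ → ℕ := fun n =>
    (Finset.univ.filter fun p : M.State × M.State => BRel W n ⟨M, p.1⟩ ⟨M, p.2⟩).card with hcnt
  obtain ⟨m, hm⟩ : ∃ m, cnt m = sInf (Set.range cnt) :=
    Nat.sInf_mem (Set.range_nonempty cnt)
  have hsub : (Finset.univ.filter fun p : M.State × M.State => BRel W (m+1) ⟨M, p.1⟩ ⟨M, p.2⟩)
      ⊆ (Finset.univ.filter fun p : M.State × M.State => BRel W m ⟨M, p.1⟩ ⟨M, p.2⟩) := by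
    intro p hp
    simp only [Finset.mem_filter, Finset.mem_univ, true_and] at hp ⊢
    exact BRel.mono_succ _ _ _ hp
  have hcard : (Finset.univ.filter fun p : M.State × M.State =>
      BRel W m ⟨M, p.1⟩ ⟨M, p.2⟩).card ≤ (Finset.univ.filter fun p : M.State × M.State =>
      BRel W (m+1) ⟨M, p.1⟩ ⟨M, p.2⟩).card := by
    rw [show (Finset.univ.filter fun p : M.State × M.State =>
      BRel W m ⟨M, p.1⟩ ⟨M, p.2⟩).card = cnt m from rfl, hm]
    exact Nat.sInf_le ⟨m + 1, rfl⟩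
  have heq := Finset.eq_of_subset_of_card_le hsub hcard
  have hfix : ∀ s s' : M.State, BRel W m ⟨M, s⟩ ⟨M, s'⟩ → BRel W (m+1) ⟨M, s⟩ ⟨M, s'⟩ := by
    intro s s' hb
    have : (s, s') ∈ (Finset.univ.filter fun p : M.State × M.State =>
        BRel W m ⟨M, p.1⟩ ⟨M, p.2⟩) := by
      simp only [Finset.mem_filter, Finset.mem_univ, true_and]; exact hb
    rw [← heq] at this
    simpa using this
  -- propagate the fixpoint upward
  have hfix' : ∀ j, ∀ s s' : M.State,
      BRel W (m + j) ⟨M, s⟩ ⟨M, s'⟩ → BRel W (m + j + 1) ⟨M, s⟩ ⟨M, s'⟩ := by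
    intro j
    induction j with
    | zero => exact hfix
    | succ j ih =>
      have := brel_fix_step M W (m + j) ih
      intro s s' hb
      have h1 : m + (j + 1) = (m + j) + 1 := by omega
      have h2 : m + (j + 1) + 1 = (m + j) + 2 := by omega
      rw [h2]; exact this s s' (h1 ▸ hb)
  refine ⟨m, fun s s' hb n => ?_⟩
  rcases le_or_gt n m with hn | hn
  · exact BRel.of_le hn hb
  · have : ∀ j, BRel W (m + j) ⟨M, s⟩ ⟨M, s'⟩ := by
      intro j
      induction j with
      | zero => exact hb
      | succ j ih => exact hfix' j s s' ih
    have := this (n - m)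
    rwa [show m + (n - m) = n by omega] at this

/-- The key property of the characterization number. -/
lemma ch_spec (M : Kripke Atom) (V : Set Atom) :
    ∀ s s' : M.State, BRel Vᶜ (ch M V) ⟨M, s⟩ ⟨M, s'⟩ → VBisim Vᶜ ⟨M, s⟩ ⟨M, s'⟩ := by
  obtain ⟨m, hm⟩ := brel_stab M Vᶜ
  intro s s' hb
  by_contra hnb
  have hne : {n | ¬ TreeBisim Vᶜ M M n s s'}.Nonempty := by
    simp only [VBisim, not_forall] at hnb
    obtain ⟨n, hn⟩ := hnb
    exact ⟨n, fun hc => hn ((treeBisim_iff_brel n s s').1 hc)⟩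
  set k := sInf {n | ¬ TreeBisim Vᶜ M M n s s'} with hk
  have hkmem : ¬ TreeBisim Vᶜ M M k s s' := Nat.sInf_mem hne
  have hdis : dis M V s s' k :=
    ⟨hnb, hkmem, fun n hn => Nat.sInf_le hn⟩
  have hd : ∃ s s' k, dis M V s s' k := ⟨s, s', k, hdis⟩
  have hch : ch M V = sSup {k | ∃ s s', dis M V s s' k} := by
    rw [ch]
    exact if_pos hd
  -- the set of distinguishing depths is bounded by m
  have hbdd : ∀ j ∈ {k | ∃ s s', dis M V s s' k}, j ≤ m := by
    rintro j ⟨a, b, hnab, hjmem, hjle⟩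
    refine hjle ?_
    intro hc
    exact hnab (hm a b ((treeBisim_iff_brel m a b).1 hc))
  have hkle : k ≤ ch M V := by
    rw [hch]
    exact le_csSup ⟨m, fun j hj => hbdd j hj⟩ ⟨s, s', hdis⟩
  exact hkmem ((treeBisim_iff_brel k s s').2 (BRel.of_le hkle hb))

end Auxil3

section Auxil4
variable {Atom : Type u}

lemma sat_charForm_iff [Finite Atom] (M : InitKripke Atom) (V : Set Atom)
    (N : Kripke Atom) (t0 : N.State) :
    Sat N (charForm M V) t0 ↔ VBisim Vᶜ ⟨M.toKripke, M.s0⟩ ⟨N, t0⟩ := by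
  set c := ch M.toKripke V with hc
  simp only [charForm]
  rw [sat_and, sat_andList]
  constructor
  · rintro ⟨h0, hAG⟩
    have hroot : BRel Vᶜ c ⟨M.toKripke, M.s0⟩ ⟨N, t0⟩ := (sat_charTree c _ _).1 h0
    have hinv : ∀ (s : M.State) (t : N.State), Relation.ReflTransGen N.R t0 t →
        BRel Vᶜ c ⟨M.toKripke, s⟩ ⟨N, t⟩ →
        ((∀ s', M.toKripke.R s s' → ∃ t', N.R t t' ∧ BRel Vᶜ c ⟨M.toKripke, s'⟩ ⟨N, t'⟩) ∧
         (∀ t', N.R t t' → ∃ s', M.toKripke.R s s' ∧ BRel Vᶜ c ⟨M.toKripke, s'⟩ ⟨N, t'⟩)) := by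
      intro s t hre hb
      have hφ := hAG _ (List.mem_map.2 ⟨s, mem_setToList.2 (Set.mem_univ s), rfl⟩)
      rw [sat_AG] at hφ
      have hφt := hφ t hre
      rw [sat_imp] at hφt
      have hbody := hφt ((sat_charTree c _ _).2 hb)
      rw [sat_and, sat_andList, sat_AX] at hbody
      obtain ⟨hf, hbk⟩ := hbody
      constructor
      · intro s' r'
        obtain ⟨t', rt', hs⟩ := hf ((charTree M.toKripke V c s').EX)
          (List.mem_map.2 ⟨s', mem_succList.2 r', rfl⟩)
        exact ⟨t', rt', (sat_charTree c _ _).1 hs⟩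
      · intro t' rt'
        obtain ⟨φ, hmem, hs⟩ := (sat_orList _).1 (hbk t' rt')
        obtain ⟨s', hs', rfl⟩ := List.mem_map.1 hmem
        exact ⟨s', mem_succList.1 hs', (sat_charTree c _ _).1 hs⟩
    have claim : ∀ n (s : M.State) (t : N.State), Relation.ReflTransGen N.R t0 t →
        BRel Vᶜ c ⟨M.toKripke, s⟩ ⟨N, t⟩ → BRel Vᶜ n ⟨M.toKripke, s⟩ ⟨N, t⟩ := by
      intro n
      induction n with
      | zero => intro s t _ hb; exact BRel.of_le (Nat.zero_le c) hb
      | succ n ih =>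
        intro s t hre hb
        obtain ⟨hf, hbk⟩ := hinv s t hre hb
        refine ⟨BRel.of_le (Nat.zero_le c) hb, fun t1 r1 => ?_, fun t2 r2 => ?_⟩
        · obtain ⟨t', rt', hb'⟩ := hf t1 r1
          exact ⟨t', rt', ih t1 t' (hre.tail rt') hb'⟩
        · obtain ⟨s', rs', hb'⟩ := hbk t2 r2
          exact ⟨s', rs', ih s' t2 (hre.tail r2) hb'⟩
    exact fun n => claim n M.s0 t0 Relation.ReflTransGen.refl hroot
  · intro hbis
    refine ⟨(sat_charTree c _ _).2 (hbis c), ?_⟩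
    intro φ hmem
    obtain ⟨s, -, rfl⟩ := List.mem_map.1 hmem
    rw [sat_AG]
    intro t hre
    have hu : ∃ u : M.State, VBisim Vᶜ ⟨M.toKripke, u⟩ ⟨N, t⟩ := by
      induction hre with
      | refl => exact ⟨M.s0, hbis⟩
      | tail hab r ih =>
        obtain ⟨u, hu⟩ := ih
        obtain ⟨u', r', hu'⟩ := hu.symm.step r
        exact ⟨u', hu'.symm⟩
    obtain ⟨u, hu⟩ := hu
    rw [sat_imp]
    intro hTs
    have hb : BRel Vᶜ c ⟨M.toKripke, s⟩ ⟨N, t⟩ := (sat_charTree c _ _).1 hTs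
    have hsu : VBisim Vᶜ ⟨M.toKripke, s⟩ ⟨M.toKripke, u⟩ :=
      ch_spec M.toKripke V s u (BRel.trans c hb (BRel.symm c (hu c)))
    have hst : VBisim Vᶜ ⟨M.toKripke, s⟩ ⟨N, t⟩ := hsu.trans hu
    obtain ⟨-, hf, hbk⟩ := hst (c + 1)
    rw [sat_and, sat_andList, sat_AX]
    constructor
    · intro φ hmem
      obtain ⟨s', hs', rfl⟩ := List.mem_map.1 hmem
      obtain ⟨t', rt', hb'⟩ := hf s' (mem_succList.1 hs')
      exact ⟨t', rt', (sat_charTree c _ _).2 hb'⟩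
    · intro t' rt'
      obtain ⟨s', rs', hb'⟩ := hbk t' rt'
      exact (sat_orList _).2
        ⟨_, List.mem_map.2 ⟨s', mem_succList.2 rs', rfl⟩, (sat_charTree c _ _).2 hb'⟩

end Auxil4

/-- if `(M,s_0) ↔_{𝒜∖V} (M',s_0')` then `F_V(M,s_0) ≡ F_V(M',s_0')`. -/
theorem vbisim_charForm_equiv {Atom : Type u} [Finite Atom] (V : Set Atom)
    (M M' : InitKripke Atom) (h : VBisim Vᶜ M.toKS M'.toKS) :
    CTLEquiv (charForm M V) (charForm M' V) := by
  unfold CTLEquiv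
  ext N
  simp only [CTLMod, Set.mem_setOf_eq]
  rw [sat_charForm_iff, sat_charForm_iff]
  have h' : VBisim Vᶜ ⟨M.toKripke, M.s0⟩ ⟨M'.toKripke, M'.s0⟩ := h
  exact ⟨fun hb => h'.symm.trans hb, fun hb => h'.trans hb⟩
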